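/- The exterior algebra Λ of the 3d calculus has the classical dimensions: the grading of Λ induced from the tensor algebra satisfies dim Λ⁰ = 1, dim Λ¹ = 3, dim Λ² = 3, dim Λ³ = 1, and Λᵏ = 0 for all k ≥ 4; moreover the images of ω₋∧ω_z, ω₊∧ω_z, ω₋∧ω₊ form a basis of Λ² and θ := ω₋∧ω₊∧ω_z spans Λ³. -/

import Mathlib

open TensorProduct

noncomputable section

/-- The 3-dimensional complex vector space with basis `ω 0 = ω₋`, `ω 1 = ω₊`, `ω 2 = ω_z`. -/
abbrev V : Type := Fin 3 → ℂ

/-- The distinguished basis `(ω₋, ω₊, ω_z)` of `V`. -/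
def ω : Fin 3 → V := fun i => Pi.basisFun ℂ (Fin 3) i

/-- The degree-2 relations of the exterior algebra of the 3d calculus: each generator is
set equal to `0`.  `RingQuot` of this relation is the quotient of the tensor algebra by the
two-sided ideal generated by the six elements. -/
inductive rel (q : ℝ) : TensorAlgebra ℂ V → TensorAlgebra ℂ V → Prop
  | mm : rel q (TensorAlgebra.ι ℂ (ω 0) * TensorAlgebra.ι ℂ (ω 0)) 0
  | pp : rel q (TensorAlgebra.ι ℂ (ω 1) * TensorAlgebra.ι ℂ (ω 1)) 0
  | zz : rel q (TensorAlgebra.ι ℂ (ω 2) * TensorAlgebra.ι ℂ (ω 2)) 0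
  | mp : rel q (TensorAlgebra.ι ℂ (ω 0) * TensorAlgebra.ι ℂ (ω 1) +
      ((q : ℂ) ^ 2)⁻¹ • (TensorAlgebra.ι ℂ (ω 1) * TensorAlgebra.ι ℂ (ω 0))) 0
  | zm : rel q (TensorAlgebra.ι ℂ (ω 2) * TensorAlgebra.ι ℂ (ω 0) +
      (q : ℂ) ^ 4 • (TensorAlgebra.ι ℂ (ω 0) * TensorAlgebra.ι ℂ (ω 2))) 0
  | zp : rel q (TensorAlgebra.ι ℂ (ω 2) * TensorAlgebra.ι ℂ (ω 1) +
      ((q : ℂ) ^ 4)⁻¹ • (TensorAlgebra.ι ℂ (ω 1) * TensorAlgebra.ι ℂ (ω 2))) 0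

/-- The exterior algebra `Λ` of the 3d calculus. -/
abbrev Lam (q : ℝ) : Type := RingQuot (rel q)

/-- The quotient map `T(V) → Λ`. -/
def mkL (q : ℝ) : TensorAlgebra ℂ V →ₐ[ℂ] Lam q := RingQuot.mkAlgHom ℂ (rel q)

/-- The degree-`k` component `Λᵏ` of `Λ`: the image of the `k`-th power of the degree-1
part of the tensor algebra (the grading induced from the tensor algebra). -/
def gradeL (q : ℝ) (k : ℕ) : Submodule ℂ (Lam q) :=
  Submodule.map (mkL q).toLinearMap
    ((LinearMap.range (TensorAlgebra.ι ℂ : V →ₗ[ℂ] TensorAlgebra ℂ V)) ^ k)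

/-- The images `ω₋, ω₊, ω_z` of the basis 1-forms in `Λ¹`. -/
def ωL (q : ℝ) (a : Fin 3) : Lam q := mkL q (TensorAlgebra.ι ℂ (ω a))

/-- `f₋ = ω₋∧ω_z ∈ Λ²`. -/
def fm (q : ℝ) : Lam q := mkL q (TensorAlgebra.ι ℂ (ω 0) * TensorAlgebra.ι ℂ (ω 2))

/-- `f₊ = ω₊∧ω_z ∈ Λ²`. -/
def fp (q : ℝ) : Lam q := mkL q (TensorAlgebra.ι ℂ (ω 1) * TensorAlgebra.ι ℂ (ω 2))

/-- `f_z = ω₋∧ω₊ ∈ Λ²`. -/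
def fz (q : ℝ) : Lam q := mkL q (TensorAlgebra.ι ℂ (ω 0) * TensorAlgebra.ι ℂ (ω 1))

/-- The top form `θ = ω₋∧ω₊∧ω_z ∈ Λ³`. -/
def θL (q : ℝ) : Lam q :=
  mkL q (TensorAlgebra.ι ℂ (ω 0) * TensorAlgebra.ι ℂ (ω 1) * TensorAlgebra.ι ℂ (ω 2))

/-- `λ₂ = 1 + q²`. -/
def lam2 (q : ℝ) : ℂ := 1 + (q : ℂ) ^ 2

/-- `λ₃ = 1 + 2q² + 2q⁴ + q⁶`. -/
def lam3 (q : ℝ) : ℂ := 1 + 2 * (q : ℂ) ^ 2 + 2 * (q : ℂ) ^ 4 + (q : ℂ) ^ 6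

abbrev W : Type := Fin 8 → ℂ
def bW : Module.Basis (Fin 8) ℂ W := Pi.basisFun ℂ (Fin 8)

def XE (q : ℝ) : Module.End ℂ W :=
  bW.constr ℂ ![bW 1, 0, bW 6, bW 4, 0, bW 7, 0, 0]
def YE (q : ℝ) : Module.End ℂ W :=
  bW.constr ℂ ![bW 2, -(q:ℂ)^2 • bW 6, 0, bW 5, -(q:ℂ)^2 • bW 7, 0, 0, 0]
def ZE (q : ℝ) : Module.End ℂ W :=
  bW.constr ℂ ![bW 3, -(q:ℂ)^4 • bW 4, -((q:ℂ)^4)⁻¹ • bW 5, 0, 0, 0, bW 7, 0]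

variable {q : ℝ}

@[simp] lemma XE_0 : XE q (bW 0) = bW 1 := by rw [XE]; exact Module.Basis.constr_basis _ _ _ _
@[simp] lemma XE_1 : XE q (bW 1) = 0 := by rw [XE]; exact Module.Basis.constr_basis _ _ _ _
@[simp] lemma XE_2 : XE q (bW 2) = bW 6 := by rw [XE]; exact Module.Basis.constr_basis _ _ _ _
@[simp] lemma XE_3 : XE q (bW 3) = bW 4 := by rw [XE]; exact Module.Basis.constr_basis _ _ _ _
@[simp] lemma XE_4 : XE q (bW 4) = 0 := by rw [XE]; exact Module.Basis.constr_basis _ _ _ _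
@[simp] lemma XE_5 : XE q (bW 5) = bW 7 := by rw [XE]; exact Module.Basis.constr_basis _ _ _ _
@[simp] lemma XE_6 : XE q (bW 6) = 0 := by rw [XE]; exact Module.Basis.constr_basis _ _ _ _
@[simp] lemma XE_7 : XE q (bW 7) = 0 := by rw [XE]; exact Module.Basis.constr_basis _ _ _ _
@[simp] lemma YE_0 : YE q (bW 0) = bW 2 := by rw [YE]; exact Module.Basis.constr_basis _ _ _ _
@[simp] lemma YE_1 : YE q (bW 1) = -(q:ℂ)^2 • bW 6 := by rw [YE]; exact Module.Basis.constr_basis _ _ _ _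
@[simp] lemma YE_2 : YE q (bW 2) = 0 := by rw [YE]; exact Module.Basis.constr_basis _ _ _ _
@[simp] lemma YE_3 : YE q (bW 3) = bW 5 := by rw [YE]; exact Module.Basis.constr_basis _ _ _ _
@[simp] lemma YE_4 : YE q (bW 4) = -(q:ℂ)^2 • bW 7 := by rw [YE]; exact Module.Basis.constr_basis _ _ _ _
@[simp] lemma YE_5 : YE q (bW 5) = 0 := by rw [YE]; exact Module.Basis.constr_basis _ _ _ _
@[simp] lemma YE_6 : YE q (bW 6) = 0 := by rw [YE]; exact Module.Basis.constr_basis _ _ _ _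
@[simp] lemma YE_7 : YE q (bW 7) = 0 := by rw [YE]; exact Module.Basis.constr_basis _ _ _ _
@[simp] lemma ZE_0 : ZE q (bW 0) = bW 3 := by rw [ZE]; exact Module.Basis.constr_basis _ _ _ _
@[simp] lemma ZE_1 : ZE q (bW 1) = -(q:ℂ)^4 • bW 4 := by rw [ZE]; exact Module.Basis.constr_basis _ _ _ _
@[simp] lemma ZE_2 : ZE q (bW 2) = -((q:ℂ)^4)⁻¹ • bW 5 := by rw [ZE]; exact Module.Basis.constr_basis _ _ _ _
@[simp] lemma ZE_3 : ZE q (bW 3) = 0 := by rw [ZE]; exact Module.Basis.constr_basis _ _ _ _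
@[simp] lemma ZE_4 : ZE q (bW 4) = 0 := by rw [ZE]; exact Module.Basis.constr_basis _ _ _ _
@[simp] lemma ZE_5 : ZE q (bW 5) = 0 := by rw [ZE]; exact Module.Basis.constr_basis _ _ _ _
@[simp] lemma ZE_6 : ZE q (bW 6) = bW 7 := by rw [ZE]; exact Module.Basis.constr_basis _ _ _ _
@[simp] lemma ZE_7 : ZE q (bW 7) = 0 := by rw [ZE]; exact Module.Basis.constr_basis _ _ _ _

def gens (q : ℝ) : V →ₗ[ℂ] Module.End ℂ W :=
  (Pi.basisFun ℂ (Fin 3)).constr ℂ ![XE q, YE q, ZE q]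

lemma gens_ω (a : Fin 3) : gens q (ω a) = ![XE q, YE q, ZE q] a :=
  Module.Basis.constr_basis _ _ _ _

lemma rel_sound (q : ℝ) (hq : (q:ℂ) ≠ 0) :
    ∀ ⦃x y⦄, rel q x y → TensorAlgebra.lift ℂ (gens q) x = TensorAlgebra.lift ℂ (gens q) y := by
  have hq2 : (q:ℂ)^2 ≠ 0 := pow_ne_zero _ hq
  have hq4 : (q:ℂ)^4 ≠ 0 := pow_ne_zero _ hq
  intro x y h
  induction h <;>
    simp only [map_add, map_mul, map_smul, map_zero, TensorAlgebra.lift_ι_apply, gens_ω,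
      Matrix.cons_val_zero, Matrix.cons_val_one, Matrix.head_cons, Matrix.cons_val_two,
      Matrix.tail_cons] <;>
    refine bW.ext fun i => ?_ <;>
    fin_cases i <;>
    simp [Module.End.mul_apply, LinearMap.add_apply, LinearMap.smul_apply, map_smul,
      smul_smul, hq2, hq4]


noncomputable section Aux
variable {q : ℝ}

def φL (q : ℝ) (hq : (q:ℂ) ≠ 0) : Lam q →ₐ[ℂ] Module.End ℂ W :=
  RingQuot.liftAlgHom ℂ ⟨TensorAlgebra.lift ℂ (gens q), rel_sound q hq⟩

lemma φ_mk (hq : (q:ℂ) ≠ 0) (x : TensorAlgebra ℂ V) :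
    φL q hq (mkL q x) = TensorAlgebra.lift ℂ (gens q) x :=
  RingQuot.liftAlgHom_mkAlgHom_apply _ _ _ _

def ε (q : ℝ) (hq : (q:ℂ) ≠ 0) : Lam q →ₗ[ℂ] W where
  toFun a := φL q hq a (bW 0)
  map_add' a b := by simp
  map_smul' c a := by simp


lemma ε_mk (hq : (q:ℂ) ≠ 0) (x : TensorAlgebra ℂ V) :
    ε q hq (mkL q x) = TensorAlgebra.lift ℂ (gens q) x (bW 0) := by
  rw [ε]; dsimp only [LinearMap.coe_mk, AddHom.coe_mk]; rw [φ_mk]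

lemma ε_one (hq : (q:ℂ) ≠ 0) : ε q hq 1 = bW 0 := by
  have : (1 : Lam q) = mkL q 1 := (map_one _).symm
  rw [this, ε_mk, map_one]; rfl

lemma ε_ω (hq : (q:ℂ) ≠ 0) (a : Fin 3) :
    ε q hq (ωL q a) = (![bW 1, bW 2, bW 3] : Fin 3 → W) a := by
  rw [ωL, ε_mk, TensorAlgebra.lift_ι_apply, gens_ω]
  fin_cases a
  · exact XE_0 (q:=q)
  · exact YE_0 (q:=q)
  · exact ZE_0 (q:=q)

lemma ε_fm (hq : (q:ℂ) ≠ 0) : ε q hq (fm q) = bW 4 := by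
  rw [fm, ε_mk, map_mul, Module.End.mul_apply, TensorAlgebra.lift_ι_apply,
    TensorAlgebra.lift_ι_apply, gens_ω, gens_ω]
  show XE q (ZE q (bW 0)) = bW 4
  rw [ZE_0, XE_3]

lemma ε_fp (hq : (q:ℂ) ≠ 0) : ε q hq (fp q) = bW 5 := by
  rw [fp, ε_mk, map_mul, Module.End.mul_apply, TensorAlgebra.lift_ι_apply,
    TensorAlgebra.lift_ι_apply, gens_ω, gens_ω]
  show YE q (ZE q (bW 0)) = bW 5
  rw [ZE_0, YE_3]

lemma ε_fz (hq : (q:ℂ) ≠ 0) : ε q hq (fz q) = bW 6 := by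
  rw [fz, ε_mk, map_mul, Module.End.mul_apply, TensorAlgebra.lift_ι_apply,
    TensorAlgebra.lift_ι_apply, gens_ω, gens_ω]
  show XE q (YE q (bW 0)) = bW 6
  rw [YE_0, XE_2]

lemma ε_θ (hq : (q:ℂ) ≠ 0) : ε q hq (θL q) = bW 7 := by
  rw [θL, ε_mk, map_mul, map_mul, Module.End.mul_apply, Module.End.mul_apply,
    TensorAlgebra.lift_ι_apply, TensorAlgebra.lift_ι_apply, TensorAlgebra.lift_ι_apply,
    gens_ω, gens_ω, gens_ω]
  show XE q (YE q (ZE q (bW 0))) = bW 7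
  rw [ZE_0, YE_3, XE_5]

lemma indep_f (hq : (q:ℂ) ≠ 0) : LinearIndependent ℂ ![fm q, fp q, fz q] := by
  apply LinearIndependent.of_comp (ε q hq)
  have h : ⇑(ε q hq) ∘ ![fm q, fp q, fz q] = ⇑bW ∘ ![4, 5, 6] := by
    funext i; fin_cases i
    · exact ε_fm hq
    · exact ε_fp hq
    · exact ε_fz hq
  rw [h]
  exact bW.linearIndependent.comp _ (by decide)

lemma indep_ω (hq : (q:ℂ) ≠ 0) : LinearIndependent ℂ ![ωL q 0, ωL q 1, ωL q 2] := by
  apply LinearIndependent.of_comp (ε q hq)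
  have h : ⇑(ε q hq) ∘ ![ωL q 0, ωL q 1, ωL q 2] = ⇑bW ∘ ![1, 2, 3] := by
    funext i; fin_cases i
    · exact ε_ω hq 0
    · exact ε_ω hq 1
    · exact ε_ω hq 2
  rw [h]
  exact bW.linearIndependent.comp _ (by decide)

lemma θ_ne (hq : (q:ℂ) ≠ 0) : θL q ≠ 0 := by
  intro h
  have := ε_θ hq
  rw [h, map_zero] at this
  have h7 : bW 7 ≠ 0 := bW.ne_zero 7
  exact h7 this.symm

lemma one_ne (hq : (q:ℂ) ≠ 0) : (1 : Lam q) ≠ 0 := by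
  intro h
  have := ε_one hq
  rw [h, map_zero] at this
  exact bW.ne_zero 0 this.symm

lemma finrank_span_f (hq : (q:ℂ) ≠ 0) :
    Module.finrank ℂ (Submodule.span ℂ {fm q, fp q, fz q}) = 3 := by
  have hr : ({fm q, fp q, fz q} : Set (Lam q)) = Set.range ![fm q, fp q, fz q] := by
    simp only [Matrix.range_cons, Matrix.range_empty, Set.union_empty, Set.singleton_union,
      Set.union_singleton]
    ext x
    simp [or_comm, or_assoc, or_left_comm]
  rw [hr, finrank_span_eq_card (indep_f hq)]
  simp

lemma finrank_span_ω (hq : (q:ℂ) ≠ 0) :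
    Module.finrank ℂ (Submodule.span ℂ {ωL q 0, ωL q 1, ωL q 2}) = 3 := by
  have hr : ({ωL q 0, ωL q 1, ωL q 2} : Set (Lam q)) = Set.range ![ωL q 0, ωL q 1, ωL q 2] := by
    simp only [Matrix.range_cons, Matrix.range_empty, Set.union_empty, Set.singleton_union,
      Set.union_singleton]
    ext x
    simp [or_comm, or_assoc, or_left_comm]
  rw [hr, finrank_span_eq_card (indep_ω hq)]
  simp

-- products of generators
lemma mul_ω (a b : Fin 3) :
    ωL q a * ωL q b = mkL q (TensorAlgebra.ι ℂ (ω a) * TensorAlgebra.ι ℂ (ω b)) :=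
  (map_mul _ _ _).symm

lemma rel_zero {x : TensorAlgebra ℂ V} (h : rel q x 0) : mkL q x = 0 := by
  have := RingQuot.mkAlgHom_rel ℂ h
  simpa [_root_.mkL] using this

lemma w00 : ωL q 0 * ωL q 0 = 0 := by rw [mul_ω]; exact rel_zero rel.mm
lemma w11 : ωL q 1 * ωL q 1 = 0 := by rw [mul_ω]; exact rel_zero rel.pp
lemma w22 : ωL q 2 * ωL q 2 = 0 := by rw [mul_ω]; exact rel_zero rel.zz
lemma w01 : ωL q 0 * ωL q 1 = fz q := by rw [mul_ω]; rfl
lemma w02 : ωL q 0 * ωL q 2 = fm q := by rw [mul_ω]; rfl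
lemma w12 : ωL q 1 * ωL q 2 = fp q := by rw [mul_ω]; rfl

lemma w10 (hq : (q:ℂ) ≠ 0) : ωL q 1 * ωL q 0 = (-(q:ℂ)^2) • fz q := by
  have hq2 : (q:ℂ)^2 ≠ 0 := pow_ne_zero _ hq
  have h := rel_zero (q := q) rel.mp
  rw [map_add, map_smul, ← mul_ω, ← mul_ω] at h
  rw [w01] at h
  have h2 := congrArg (fun z => (q:ℂ)^2 • z) h
  simp only [smul_add, smul_smul, mul_inv_cancel₀ hq2, one_smul, smul_zero] at h2
  exact (eq_neg_of_add_eq_zero_right h2).trans (neg_smul _ _).symm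

lemma w20 : ωL q 2 * ωL q 0 = (-(q:ℂ)^4) • fm q := by
  have h := rel_zero (q := q) rel.zm
  rw [map_add, map_smul, ← mul_ω, ← mul_ω, w02] at h
  exact (eq_neg_of_add_eq_zero_left h).trans (neg_smul ((q:ℂ)^4) (fm q)).symm

lemma w21 : ωL q 2 * ωL q 1 = (-((q:ℂ)^4)⁻¹) • fp q := by
  have h := rel_zero (q := q) rel.zp
  rw [map_add, map_smul, ← mul_ω, ← mul_ω, w12] at h
  exact (eq_neg_of_add_eq_zero_left h).trans (neg_smul ((q:ℂ)^4)⁻¹ (fp q)).symm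

lemma fm_eq : fm q = ωL q 0 * ωL q 2 := (w02).symm
lemma fp_eq : fp q = ωL q 1 * ωL q 2 := (w12).symm
lemma fz_eq : fz q = ωL q 0 * ωL q 1 := (w01).symm
lemma θ_eq : θL q = ωL q 0 * ωL q 1 * ωL q 2 := by
  rw [θL, map_mul, map_mul]; rfl

lemma fz_w2 : fz q * ωL q 2 = θL q := by rw [fz_eq]; exact θ_eq.symm

-- degree 3 products
lemma fm_w0 : fm q * ωL q 0 = 0 := by
  rw [fm_eq, mul_assoc, w20, mul_smul_comm, fm_eq, ← mul_assoc, w00, zero_mul, smul_zero]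
lemma fm_w1 : fm q * ωL q 1 = (-((q:ℂ)^4)⁻¹) • θL q := by
  rw [fm_eq, mul_assoc, w21, mul_smul_comm, fp_eq, ← mul_assoc, w01, fz_w2]
lemma fm_w2 : fm q * ωL q 2 = 0 := by
  rw [fm_eq, mul_assoc, w22, mul_zero]
lemma fp_w0 (hq : (q:ℂ) ≠ 0) : fp q * ωL q 0 = ((q:ℂ)^6) • θL q := by
  rw [fp_eq, mul_assoc, w20, mul_smul_comm, fm_eq, ← mul_assoc, w10 hq, smul_mul_assoc,
    smul_smul, fz_w2, show (-(q:ℂ)^4) * (-(q:ℂ)^2) = (q:ℂ)^6 by ring]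
lemma fp_w1 : fp q * ωL q 1 = 0 := by
  rw [fp_eq, mul_assoc, w21, mul_smul_comm, fp_eq, ← mul_assoc, w11, zero_mul, smul_zero]
lemma fp_w2 : fp q * ωL q 2 = 0 := by
  rw [fp_eq, mul_assoc, w22, mul_zero]
lemma fz_w0 (hq : (q:ℂ) ≠ 0) : fz q * ωL q 0 = 0 := by
  rw [fz_eq, mul_assoc, w10 hq, mul_smul_comm, fz_eq, ← mul_assoc, w00, zero_mul, smul_zero]
lemma fz_w1 : fz q * ωL q 1 = 0 := by
  rw [fz_eq, mul_assoc, w11, mul_zero]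
-- degree 4 products
lemma θ_w0 (hq : (q:ℂ) ≠ 0) : θL q * ωL q 0 = 0 := by
  rw [θ_eq, ← fz_eq, mul_assoc, w20, mul_smul_comm, fm_eq, ← mul_assoc, fz_w0 hq,
    zero_mul, smul_zero]
lemma θ_w1 : θL q * ωL q 1 = 0 := by
  rw [θ_eq, ← fz_eq, mul_assoc, w21, mul_smul_comm, fp_eq, ← mul_assoc, fz_w1,
    zero_mul, smul_zero]
lemma θ_w2 : θL q * ωL q 2 = 0 := by
  rw [θ_eq, mul_assoc, w22, mul_zero]

-- grading computations
lemma grade_succ (k : ℕ) : gradeL q (k+1) = gradeL q k * gradeL q 1 := by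
  rw [gradeL, gradeL, gradeL, pow_succ, Submodule.map_mul, pow_one]

lemma grade_zero : gradeL q 0 = Submodule.span ℂ {(1 : Lam q)} := by
  rw [gradeL, pow_zero, Submodule.map_one, Submodule.one_eq_span]

lemma grade_one : gradeL q 1 = Submodule.span ℂ {ωL q 0, ωL q 1, ωL q 2} := by
  have h1 : (LinearMap.range (TensorAlgebra.ι ℂ : V →ₗ[ℂ] TensorAlgebra ℂ V))
      = Submodule.span ℂ (Set.range fun a => TensorAlgebra.ι ℂ (ω a)) := by
    rw [LinearMap.range_eq_map, ← (Pi.basisFun ℂ (Fin 3)).span_eq, Submodule.map_span,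
      ← Set.range_comp]
    rfl
  rw [gradeL, pow_one, h1, Submodule.map_span, ← Set.range_comp]
  have h2 : ((mkL q).toLinearMap ∘ fun a => TensorAlgebra.ι ℂ (ω a))
      = ![ωL q 0, ωL q 1, ωL q 2] := by
    funext a; fin_cases a <;> rfl
  rw [h2]
  congr 1
  simp only [Matrix.range_cons, Matrix.range_empty, Set.union_empty, Set.singleton_union,
    Set.union_singleton]
  ext x
  simp [or_comm, or_assoc, or_left_comm]

lemma grade_two (hq : (q:ℂ) ≠ 0) :
    gradeL q 2 = Submodule.span ℂ {fm q, fp q, fz q} := by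
  rw [grade_succ, grade_one, Submodule.span_mul_span]
  apply le_antisymm
  · rw [Submodule.span_le]
    rintro x hx
    rw [Set.mem_mul] at hx
    obtain ⟨a, ha, b, hb, rfl⟩ := hx
    simp only [Set.mem_insert_iff, Set.mem_singleton_iff] at ha hb
    rcases ha with rfl|rfl|rfl <;> rcases hb with rfl|rfl|rfl
    · rw [w00]; exact zero_mem _
    · rw [w01]; exact Submodule.subset_span (by simp)
    · rw [w02]; exact Submodule.subset_span (by simp)
    · rw [w10 hq]; exact Submodule.smul_mem _ _ (Submodule.subset_span (by simp))
    · rw [w11]; exact zero_mem _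
    · rw [w12]; exact Submodule.subset_span (by simp)
    · rw [w20]; exact Submodule.smul_mem _ _ (Submodule.subset_span (by simp))
    · rw [w21]; exact Submodule.smul_mem _ _ (Submodule.subset_span (by simp))
    · rw [w22]; exact zero_mem _
  · rw [Submodule.span_le]
    rintro x hx
    simp only [Set.mem_insert_iff, Set.mem_singleton_iff] at hx
    rcases hx with rfl|rfl|rfl
    · rw [fm_eq]
      exact Submodule.subset_span (Set.mul_mem_mul (by simp) (by simp))
    · rw [fp_eq]
      exact Submodule.subset_span (Set.mul_mem_mul (by simp) (by simp))
    · rw [fz_eq]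
      exact Submodule.subset_span (Set.mul_mem_mul (by simp) (by simp))

lemma grade_three (hq : (q:ℂ) ≠ 0) :
    gradeL q 3 = Submodule.span ℂ {θL q} := by
  rw [grade_succ, grade_two hq, grade_one, Submodule.span_mul_span]
  apply le_antisymm
  · rw [Submodule.span_le]
    rintro x hx
    rw [Set.mem_mul] at hx
    obtain ⟨a, ha, b, hb, rfl⟩ := hx
    simp only [Set.mem_insert_iff, Set.mem_singleton_iff] at ha hb
    rcases ha with rfl|rfl|rfl <;> rcases hb with rfl|rfl|rfl
    · rw [fm_w0]; exact zero_mem _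
    · rw [fm_w1]; exact Submodule.smul_mem _ _ (Submodule.subset_span (by simp))
    · rw [fm_w2]; exact zero_mem _
    · rw [fp_w0 hq]; exact Submodule.smul_mem _ _ (Submodule.subset_span (by simp))
    · rw [fp_w1]; exact zero_mem _
    · rw [fp_w2]; exact zero_mem _
    · rw [fz_w0 hq]; exact zero_mem _
    · rw [fz_w1]; exact zero_mem _
    · rw [fz_w2]; exact Submodule.subset_span (by simp)
  · rw [Submodule.span_le]
    rintro x hx
    simp only [Set.mem_singleton_iff] at hx
    subst hx
    rw [← fz_w2]
    exact Submodule.subset_span (Set.mul_mem_mul (by simp) (by simp))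

lemma grade_four (hq : (q:ℂ) ≠ 0) : gradeL q 4 = ⊥ := by
  rw [grade_succ, grade_three hq, grade_one, Submodule.span_mul_span]
  rw [Submodule.span_eq_bot]
  rintro x hx
  rw [Set.mem_mul] at hx
  obtain ⟨a, ha, b, hb, rfl⟩ := hx
  simp only [Set.mem_insert_iff, Set.mem_singleton_iff] at ha hb
  subst ha
  rcases hb with rfl|rfl|rfl
  · exact θ_w0 hq
  · exact θ_w1
  · exact θ_w2

lemma grade_ge_four (hq : (q:ℂ) ≠ 0) : ∀ k : ℕ, 4 ≤ k → gradeL q k = ⊥ := by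
  intro k hk
  obtain ⟨m, rfl⟩ := Nat.exists_eq_add_of_le hk
  induction m with
  | zero => exact grade_four hq
  | succ n ih =>
    rw [show 4 + (n + 1) = (4 + n) + 1 from rfl, grade_succ, ih (Nat.le_add_right _ _)]
    exact Submodule.bot_mul _

end Aux

/-- the exterior algebra of the 3d calculus has the classical dimensions
`1, 3, 3, 1` in degrees `0, 1, 2, 3` and vanishes in degree `≥ 4`; moreover
`ω₋∧ω_z, ω₊∧ω_z, ω₋∧ω₊` form a basis of `Λ²` and `θ = ω₋∧ω₊∧ω_z` spans `Λ³`. -/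
theorem exterior_algebra_dimensions (q : ℝ) (hq0 : 0 < q) (hq1 : q < 1) :
    Module.finrank ℂ (gradeL q 0) = 1 ∧
    Module.finrank ℂ (gradeL q 1) = 3 ∧
    Module.finrank ℂ (gradeL q 2) = 3 ∧
    Module.finrank ℂ (gradeL q 3) = 1 ∧
    (∀ k : ℕ, 4 ≤ k → gradeL q k = ⊥) ∧
    LinearIndependent ℂ ![fm q, fp q, fz q] ∧
    Submodule.span ℂ {fm q, fp q, fz q} = gradeL q 2 ∧
    Submodule.span ℂ {θL q} = gradeL q 3 := by
  have hq : (q:ℂ) ≠ 0 := Complex.ofReal_ne_zero.mpr hq0.ne'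
  refine ⟨?_, ?_, ?_, ?_, grade_ge_four hq, indep_f hq, ?_, ?_⟩
  · rw [grade_zero]
    exact finrank_span_singleton (one_ne hq)
  · rw [grade_one]
    exact finrank_span_ω hq
  · rw [grade_two hq]
    exact finrank_span_f hq
  · rw [grade_three hq]
    exact finrank_span_singleton (θ_ne hq)
  · exact (grade_two hq).symm
  · exact (grade_three hq).symm

end
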